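/- With h(t) = t^r(1-t)^n, r ≥ 1, and t_1 the left inflection point (h strictly convex on [0, t_1)), if p* maximizes ∑_{u=1}^k h(p(u)) over Δ_k, then at most one coordinate of p* lies in the open interval (0, t_1). -/

import Mathlib

lemma aux_max_left (k : ℕ) (r : ℝ) (n : ℕ) (t1 : ℝ)
    (hsconv : StrictConvexOn ℝ (Set.Ico (0 : ℝ) t1) (fun t : ℝ => t ^ r * (1 - t) ^ n))
    (p : Fin k → ℝ) (hp0 : ∀ u, 0 ≤ p u) (hp1 : ∑ u, p u = 1)
    (hopt : ∀ q : Fin k → ℝ, (∀ u, 0 ≤ q u) → ∑ u, q u = 1 →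
      ∑ u, q u ^ r * (1 - q u) ^ n ≤ ∑ u, p u ^ r * (1 - p u) ^ n)
    (u v : Fin k) (huv : u ≠ v) (hu : p u ∈ Set.Ioo 0 t1) (hv : p v ∈ Set.Ioo 0 t1)
    (hle : p u ≤ p v) : False := by
  set H : ℝ → ℝ := fun t : ℝ => t ^ r * (1 - t) ^ n with hH
  set a := p u with ha
  set b := p v with hb
  obtain ⟨ha0, hat⟩ := hu
  obtain ⟨hb0, hbt⟩ := hv
  set ε : ℝ := min a (t1 - b) / 2 with hε
  have hε0 : 0 < ε := by
    have : 0 < min a (t1 - b) := lt_min ha0 (by linarith)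
    positivity
  have hεa : ε < a := by
    have h1 : min a (t1 - b) ≤ a := min_le_left _ _
    simp only [hε]; linarith
  have hεb : ε < t1 - b := by
    have h1 : min a (t1 - b) ≤ t1 - b := min_le_right _ _
    simp only [hε]; linarith
  set x := a - ε with hx
  set y := b + ε with hy
  have hx0 : 0 < x := by simp [hx]; linarith
  have hyt : y < t1 := by simp [hy]; linarith
  have hxy : x < y := by simp [hx, hy]; linarith
  have hxmem : x ∈ Set.Ico (0:ℝ) t1 := ⟨le_of_lt hx0, by linarith⟩
  have hymem : y ∈ Set.Ico (0:ℝ) t1 := ⟨by linarith, hyt⟩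
  have hd : 0 < y - x := by linarith
  -- strict convexity at an interior point
  have strict : ∀ c : ℝ, x < c → c < y →
      H c < ((y - c)/(y - x)) * H x + ((c - x)/(y - x)) * H y := by
    intro c h1 h2
    have hs1 : 0 < (y - c)/(y - x) := div_pos (by linarith) hd
    have hs2 : 0 < (c - x)/(y - x) := div_pos (by linarith) hd
    have hsum : (y - c)/(y - x) + (c - x)/(y - x) = 1 := by
      field_simp; ring
    have := hsconv.2 hxmem hymem (ne_of_lt hxy) hs1 hs2 hsum
    have harg : ((y - c)/(y - x)) • x + ((c - x)/(y - x)) • y = c := by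
      simp only [smul_eq_mul]
      field_simp
      try ring
    rwa [harg] at this
  have ia := strict a (by linarith) (by linarith)
  have ib := strict b (by linarith) (by linarith)
  have e1 : (y - a)/(y - x) = (b - x)/(y - x) := by
    congr 1; simp [hx, hy]; try ring
  have e2 : (a - x)/(y - x) = (y - b)/(y - x) := by
    congr 1; simp [hx, hy]; try ring
  rw [e1, e2] at ia
  have e3 : (b - x)/(y - x) + (y - b)/(y - x) = 1 := by field_simp; ring
  have key : H a + H b < H x + H y := by
    have hexp : (b - x)/(y - x) * H x + (y - b)/(y - x) * H y
        + ((y - b)/(y - x) * H x + (b - x)/(y - x) * H y)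
        = ((b - x)/(y - x) + (y - b)/(y - x)) * (H x + H y) := by ring
    rw [e3, one_mul] at hexp
    linarith
  -- build the perturbed distribution
  set q : Fin k → ℝ := Function.update (Function.update p u x) v y with hq
  have hqv : q v = y := by simp [hq]
  have hqu : q u = x := by
    simp [hq, Function.update_of_ne huv]
  have hqother : ∀ i, i ≠ u → i ≠ v → q i = p i := by
    intro i h1 h2
    simp [hq, Function.update_of_ne h2, Function.update_of_ne h1]
  have hvmem : v ∈ Finset.univ.erase u := Finset.mem_erase.2 ⟨Ne.symm huv, Finset.mem_univ v⟩
  have split : ∀ f : Fin k → ℝ, ∑ i, f i = (∑ i ∈ (Finset.univ.erase u).erase v, f i) + f v + f u := by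
    intro f
    rw [← Finset.sum_erase_add Finset.univ f (Finset.mem_univ u),
        ← Finset.sum_erase_add _ f hvmem]
  have hsame : ∑ i ∈ (Finset.univ.erase u).erase v, q i
      = ∑ i ∈ (Finset.univ.erase u).erase v, p i := by
    apply Finset.sum_congr rfl
    intro i hi
    have h2 : i ≠ v := (Finset.mem_erase.1 hi).1
    have h1 : i ≠ u := (Finset.mem_erase.1 (Finset.mem_erase.1 hi).2).1
    exact hqother i h1 h2
  have hsameH : ∑ i ∈ (Finset.univ.erase u).erase v, H (q i)
      = ∑ i ∈ (Finset.univ.erase u).erase v, H (p i) := by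
    apply Finset.sum_congr rfl
    intro i hi
    have h2 : i ≠ v := (Finset.mem_erase.1 hi).1
    have h1 : i ≠ u := (Finset.mem_erase.1 (Finset.mem_erase.1 hi).2).1
    rw [hqother i h1 h2]
  have hq0 : ∀ i, 0 ≤ q i := by
    intro i
    by_cases h2 : i = v
    · rw [h2, hqv]; linarith
    · by_cases h1 : i = u
      · rw [h1, hqu]; linarith
      · rw [hqother i h1 h2]; exact hp0 i
  have hq1 : ∑ i, q i = 1 := by
    rw [split q, hqv, hqu, hsame]
    have := split p
    rw [hp1] at this
    simp only [hx, hy, ← ha, ← hb]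
    linarith
  have hle2 := hopt q hq0 hq1
  have lhs : ∑ i, q i ^ r * (1 - q i) ^ n
      = (∑ i ∈ (Finset.univ.erase u).erase v, H (p i)) + H y + H x := by
    rw [show (∑ i, q i ^ r * (1 - q i) ^ n) = ∑ i, H (q i) from rfl, split (fun i => H (q i)),
      hqv, hqu, hsameH]
  have rhs : ∑ i, p i ^ r * (1 - p i) ^ n
      = (∑ i ∈ (Finset.univ.erase u).erase v, H (p i)) + H b + H a := by
    rw [show (∑ i, p i ^ r * (1 - p i) ^ n) = ∑ i, H (p i) from rfl, split (fun i => H (p i))]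
  rw [lhs, rhs] at hle2
  linarith



/-- Property 3: With `h(t) = t^r (1-t)^n`, `r ≥ 1`, and `t₁` the left
inflection point (`h` convex on `[0, t₁]` and strictly convex on `[0, t₁)`), if `p*`
maximizes `∑_u h(p u)` over the simplex `Δ_k`, then at most one coordinate of `p*`
lies in the open interval `(0, t₁)`. -/
theorem maximizer_at_most_one_left (k : ℕ) (r : ℝ) (hr : 1 ≤ r)
    (n : ℕ) (hn : 1 ≤ n) (t1 : ℝ) (ht1 : 0 < t1)
    (hconv : ConvexOn ℝ (Set.Icc (0 : ℝ) t1) (fun t : ℝ => t ^ r * (1 - t) ^ n))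
    (hsconv : StrictConvexOn ℝ (Set.Ico (0 : ℝ) t1) (fun t : ℝ => t ^ r * (1 - t) ^ n))
    (p : Fin k → ℝ) (hp0 : ∀ u, 0 ≤ p u) (hp1 : ∑ u, p u = 1)
    (hopt : ∀ q : Fin k → ℝ, (∀ u, 0 ≤ q u) → ∑ u, q u = 1 →
      ∑ u, q u ^ r * (1 - q u) ^ n ≤ ∑ u, p u ^ r * (1 - p u) ^ n)
    (u v : Fin k) (hu : p u ∈ Set.Ioo 0 t1) (hv : p v ∈ Set.Ioo 0 t1) :
    u = v := by
  by_contra hne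
  rcases le_total (p u) (p v) with h | h
  · exact (aux_max_left k r n t1 hsconv p hp0 hp1 hopt u v hne hu hv h).elim
  · exact (aux_max_left k r n t1 hsconv p hp0 hp1 hopt v u (fun h' => hne h'.symm) hv hu h).elim
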